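/- Let f : ℝ → ℝ be a bounded measurable function with 0 ≤ f ≤ 1, f(ξ) = 1 for ξ < -M, f(ξ) = 0 for ξ > M, and f nonincreasing (i.e. its distributional derivative is a nonpositive measure). If f = f² almost everywhere, then there exists u ∈ [-M, M] such that f(ξ) = 𝟙_{ξ<u} for almost every ξ. -/
import Mathlib


open MeasureTheory

theorem stmt_3 (M : ℝ) (f : ℝ → ℝ) (hmeas : Measurable f)
    (hbd : ∀ ξ, 0 ≤ f ξ ∧ f ξ ≤ 1)
    (hleft : ∀ ξ, ξ < -M → f ξ = 1)
    (hright : ∀ ξ, M < ξ → f ξ = 0)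
    (hmono : Antitone f)
    (hidem : ∀ᵐ ξ : ℝ, f ξ = (f ξ) ^ 2) :
    ∃ u ∈ Set.Icc (-M) M, ∀ᵐ ξ : ℝ, f ξ = if ξ < u then 1 else 0 := by
  set S : Set ℝ := {ξ | (1:ℝ)/2 < f ξ} with hS
  have hmem : ∀ x, x < -M → x ∈ S := by
    intro x hx
    simp only [hS, Set.mem_setOf_eq, hleft x hx]
    norm_num
  have hne : S.Nonempty := ⟨-M - 1, hmem _ (by linarith)⟩
  have hbdd : BddAbove S := by
    refine ⟨M, fun x hx => ?_⟩
    by_contra h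
    push_neg at h
    have := hright x h
    simp only [hS, Set.mem_setOf_eq, this] at hx
    linarith
  set u := sSup S with hu
  have huM : u ≤ M := csSup_le hne (fun x hx => by
    by_contra h
    push_neg at h
    have := hright x h
    simp only [hS, Set.mem_setOf_eq, this] at hx
    linarith)
  have hMu : -M ≤ u := by
    by_contra h
    push_neg at h
    obtain ⟨x, hux, hxM⟩ := exists_between h
    exact absurd (le_csSup hbdd (hmem x hxM)) (not_le.mpr hux)
  refine ⟨u, ⟨hMu, huM⟩, ?_⟩
  have h2 : ∀ᵐ ξ : ℝ, ξ ≠ u := by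
    rw [ae_iff]
    simp only [not_ne_iff]
    have : {a : ℝ | a = u} = {u} := by ext a; simp
    rw [this, measure_singleton]
  filter_upwards [hidem, h2] with ξ hξ hneq
  have h01 : f ξ = 0 ∨ f ξ = 1 := by
    have : f ξ * (f ξ - 1) = 0 := by nlinarith [hξ]
    rcases mul_eq_zero.mp this with h | h
    · exact Or.inl h
    · exact Or.inr (by linarith)
  by_cases hlt : ξ < u
  · simp only [if_pos hlt]
    obtain ⟨x, hxS, hξx⟩ := exists_lt_of_lt_csSup hne hlt
    have : (1:ℝ)/2 < f x := hxS
    have hfx : (1:ℝ)/2 < f ξ := lt_of_lt_of_le this (hmono hξx.le)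
    rcases h01 with h | h
    · linarith
    · exact h
  · simp only [if_neg hlt]
    push_neg at hlt
    have hult : u < ξ := lt_of_le_of_ne hlt (Ne.symm hneq)
    have hnotS : ξ ∉ S := fun hξS => absurd (le_csSup hbdd hξS) (not_le.mpr hult)
    simp only [hS, Set.mem_setOf_eq, not_lt] at hnotS
    rcases h01 with h | h
    · exact h
    · linarith
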